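/- Let P_λ = (1−φ(λ)) P + φ(λ) Q_λ be a Markov transition kernel on a measurable space, where P and Q_λ are transition kernels and φ(λ) ∈ (0,1). Define the lifted kernel P_λ^L = φ(λ) Σ_{t≥0} (1−φ(λ))ᵗ Q_λ Pᵗ = Q_λ R_λ where R_λ = φ(λ) Σ_{t≥0} (1−φ(λ))ᵗ Pᵗ. Then every invariant probability measure μ_λ of P_λ (i.e., μ_λ P_λ = μ_λ) is also an invariant probability measure of P_λ^L. -/

import Mathlib

open MeasureTheory Filter
open scoped ENNReal

/-- `t`-step transition kernel of the Markov kernel `P`. -/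
noncomputable def kpow {X : Type*} [MeasurableSpace X]
    (P : X → Measure X) : ℕ → X → Measure X
  | 0 => fun x => Measure.dirac x
  | (n + 1) => fun x => (kpow P n x).bind P

lemma kpow_measurable {X : Type*} [MeasurableSpace X]
    (P : X → Measure X) (hPm : Measurable P) :
    ∀ n, Measurable (kpow P n) := by
  intro n
  induction n with
  | zero => exact Measure.measurable_dirac
  | succ n ih => exact (Measure.measurable_bind' hPm).comp ih

lemma kpow_prob {X : Type*} [MeasurableSpace X]
    (P : X → Measure X) (hP : ∀ x, IsProbabilityMeasure (P x)) (hPm : Measurable P) :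
    ∀ n x, IsProbabilityMeasure (kpow P n x) := by
  intro n
  induction n with
  | zero => intro x; exact Measure.dirac.isProbabilityMeasure
  | succ n ih =>
      intro x
      constructor
      rw [kpow, Measure.bind_apply MeasurableSet.univ hPm.aemeasurable]
      have : ∀ y, (P y) Set.univ = 1 := fun y => (hP y).measure_univ
      simp only [this, MeasureTheory.lintegral_const, one_mul]
      exact (ih x).measure_univ

lemma bind_prob {X : Type*} [MeasurableSpace X]
    (μ : Measure X) (hμ : IsProbabilityMeasure μ)
    (f : X → Measure X) (hf : ∀ x, IsProbabilityMeasure (f x)) (hfm : Measurable f) :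
    IsProbabilityMeasure (μ.bind f) := by
  constructor
  rw [Measure.bind_apply MeasurableSet.univ hfm.aemeasurable]
  have : ∀ y, (f y) Set.univ = 1 := fun y => (hf y).measure_univ
  simp [this]

/-- `P ∘ P^n = P^(n+1)`. -/
lemma kpow_comm {X : Type*} [MeasurableSpace X]
    (P : X → Measure X) (hPm : Measurable P) :
    ∀ n x, (P x).bind (kpow P n) = kpow P (n + 1) x := by
  intro n
  induction n with
  | zero =>
      intro x
      show (P x).bind (kpow P 0) = (kpow P 0 x).bind P
      simp only [kpow]
      rw [Measure.bind_dirac, Measure.dirac_bind hPm]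
  | succ n ih =>
      intro x
      have h1 : kpow P (n + 1) = fun y => (kpow P n y).bind P := rfl
      rw [h1, ← Measure.bind_bind (kpow_measurable P hPm n).aemeasurable hPm.aemeasurable, ih x]
      rfl

/-- Let `P_λ = (1 − φ) P + φ Q_λ` with `φ ∈ (0,1)`, and let
`P_λ^L = φ Σ_t (1 − φ)ᵗ Q_λ Pᵗ` be the lifted kernel. Then every invariant
probability measure of `P_λ` is also an invariant probability measure of `P_λ^L`. -/
theorem stmt_8
    {X : Type*} [MeasurableSpace X]
    (P Q : X → Measure X)
    (hP : ∀ x, IsProbabilityMeasure (P x)) (hPm : Measurable P)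
    (hQ : ∀ x, IsProbabilityMeasure (Q x)) (hQm : Measurable Q)
    (φ : ℝ) (hφ : φ ∈ Set.Ioo (0 : ℝ) 1)
    (Pl PlL : X → Measure X)
    -- P_λ = (1 − φ) P + φ Q_λ
    (hPl : ∀ x, Pl x = ENNReal.ofReal (1 - φ) • P x + ENNReal.ofReal φ • Q x)
    -- P_λ^L = φ Σ_t (1 − φ)ᵗ Q_λ Pᵗ  (= Q_λ R_λ)
    (hPlL : ∀ x, PlL x =
      Measure.sum fun t : ℕ =>
        ENNReal.ofReal (φ * (1 - φ) ^ t) • (Q x).bind (kpow P t)) :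
    ∀ μ : Measure X, IsProbabilityMeasure μ → μ.bind Pl = μ → μ.bind PlL = μ := by
  obtain ⟨hφ0, hφ1⟩ := hφ
  have h1φ0 : (0:ℝ) ≤ 1 - φ := by linarith
  set c : ℝ≥0∞ := ENNReal.ofReal (1 - φ) with hc
  set d : ℝ≥0∞ := ENNReal.ofReal φ with hd
  have hc1 : c < 1 := by
    rw [hc, ← ENNReal.ofReal_one]
    exact (ENNReal.ofReal_lt_ofReal_iff one_pos).mpr (by linarith)
  have hkm := kpow_measurable P hPm
  intro μ hμ hinv
  -- kernel measurability pieces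
  have hQk : ∀ t : ℕ, Measurable fun x => (Q x).bind (kpow P t) :=
    fun t => (Measure.measurable_bind' (hkm t)).comp hQm
  -- invariance rewritten
  have hinv' : ∀ {A : Set X}, MeasurableSet A →
      μ A = c * (μ.bind P) A + d * (μ.bind Q) A := by
    intro A hA
    have hPlm : Measurable Pl := by
      apply Measure.measurable_of_measurable_coe
      intro s hs
      have : (fun x => Pl x s) = fun x => c * (P x) s + d * (Q x) s := by
        funext x; rw [hPl x]; simp [Measure.add_apply]
      rw [this]
      have hPA : Measurable fun x => (P x) s := (Measure.measurable_coe hs).comp hPm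
      have hQA : Measurable fun x => (Q x) s := (Measure.measurable_coe hs).comp hQm
      exact (hPA.const_mul c).add (hQA.const_mul d)
    conv_lhs => rw [← hinv]
    rw [Measure.bind_apply hA hPlm.aemeasurable, Measure.bind_apply hA hPm.aemeasurable, Measure.bind_apply hA hQm.aemeasurable]
    have : ∀ x, (Pl x) A = c * (P x) A + d * (Q x) A := by
      intro x; rw [hPl x]; simp [Measure.add_apply]
    simp only [this]
    have hPA : Measurable fun x => (P x) A := (Measure.measurable_coe hA).comp hPm
    rw [lintegral_add_left (hPA.const_mul c),
      lintegral_const_mul' c _ ENNReal.ofReal_ne_top,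
      lintegral_const_mul' d _ ENNReal.ofReal_ne_top]
  -- ν t = μ P^t, ρ t = μ Q P^t
  set ν : ℕ → Measure X := fun t => μ.bind (kpow P t) with hν
  set ρ : ℕ → Measure X := fun t => μ.bind (fun x => (Q x).bind (kpow P t)) with hρ
  have hνprob : ∀ t, IsProbabilityMeasure (ν t) :=
    fun t => bind_prob μ hμ _ (kpow_prob P hP hPm t) (hkm t)
  -- recurrence : ν t = c • ν (t+1) + d • ρ t  (evaluated on sets)
  have hrec : ∀ t : ℕ, ∀ {A : Set X}, MeasurableSet A →
      ν t A = c * ν (t+1) A + d * ρ t A := by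
    intro t A hA
    have e1 : ν t A = ∫⁻ x, (kpow P t x) A ∂μ := Measure.bind_apply hA (hkm t).aemeasurable
    -- use hinv' applied through the kernel: compute ν t via bind_bind trick
    have key : ν t A = c * ((μ.bind P).bind (kpow P t)) A + d * ((μ.bind Q).bind (kpow P t)) A := by
      rw [e1]
      have hg : Measurable fun x => (kpow P t x) A := (Measure.measurable_coe hA).comp (hkm t)
      -- ∫ g dμ = c ∫ g d(μP) + d ∫ g d(μQ) since μ = c μP + d μQ on sets
      have hμeq : μ = c • μ.bind P + d • μ.bind Q := by
        ext s hs
        rw [hinv' hs]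
        simp [Measure.add_apply]
      rw [Measure.bind_apply hA (hkm t).aemeasurable, Measure.bind_apply hA (hkm t).aemeasurable]
      conv_lhs => rw [hμeq]
      rw [lintegral_add_measure, lintegral_smul_measure, lintegral_smul_measure, smul_eq_mul, smul_eq_mul]
    have eP : (μ.bind P).bind (kpow P t) = ν (t+1) := by
      rw [Measure.bind_bind hPm.aemeasurable (hkm t).aemeasurable]
      simp only [hν]
      congr 1
      funext x
      exact kpow_comm P hPm t x
    have eQ : (μ.bind Q).bind (kpow P t) = ρ t := by
      rw [Measure.bind_bind hQm.aemeasurable (hkm t).aemeasurable]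
    rw [key, eP, eQ]
  -- measurability of PlL
  have hPlLm : Measurable PlL := by
    apply Measure.measurable_of_measurable_coe
    intro s hs
    have : (fun x => PlL x s) = fun x =>
        ∑' t : ℕ, ENNReal.ofReal (φ * (1 - φ) ^ t) * ((Q x).bind (kpow P t)) s := by
      funext x
      rw [hPlL x, Measure.sum_apply _ hs]
      simp [Measure.smul_apply]
    rw [this]
    exact Measurable.ennreal_tsum fun t =>
      ((Measure.measurable_coe hs).comp (hQk t)).const_mul _
  -- coefficient rewrite
  have hcoef : ∀ t : ℕ, ENNReal.ofReal (φ * (1 - φ) ^ t) = d * c ^ t := by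
    intro t
    rw [ENNReal.ofReal_mul hφ0.le, ENNReal.ofReal_pow h1φ0]
  -- telescoping
  ext A hA
  have hb : ∀ t : ℕ, (c ^ t : ℝ≥0∞) * ν t A = d * c ^ t * ρ t A + c ^ (t+1) * ν (t+1) A := by
    intro t
    rw [hrec t hA]
    ring
  have hν0 : ν 0 = μ := by
    simp only [hν, kpow]
    exact Measure.bind_dirac
  have hpart : ∀ N : ℕ, μ A = (∑ t ∈ Finset.range N, d * c ^ t * ρ t A) + c ^ N * ν N A := by
    intro N
    induction N with
    | zero => simp [hν0]
    | succ N ih =>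
        rw [ih, Finset.sum_range_succ, hb N]
        ring
  set S : ℝ≥0∞ := ∑' t : ℕ, d * c ^ t * ρ t A with hS
  have hνle : ∀ N, ν N A ≤ 1 := by
    intro N
    calc ν N A ≤ ν N Set.univ := measure_mono (Set.subset_univ A)
    _ = 1 := (hνprob N).measure_univ
  have hSle : S ≤ μ A := by
    rw [hS, ENNReal.tsum_eq_iSup_sum]
    apply iSup_le
    intro s
    obtain ⟨N, hN⟩ := s.exists_nat_subset_range
    calc (∑ t ∈ s, d * c ^ t * ρ t A) ≤ ∑ t ∈ Finset.range N, d * c ^ t * ρ t A :=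
          Finset.sum_le_sum_of_subset hN
    _ ≤ (∑ t ∈ Finset.range N, d * c ^ t * ρ t A) + c ^ N * ν N A := le_self_add
    _ = μ A := (hpart N).symm
  have hleS : μ A ≤ S := by
    have htend : Tendsto (fun N : ℕ => S + c ^ N) atTop (nhds (S + 0)) :=
      Tendsto.const_add S (ENNReal.tendsto_pow_atTop_nhds_zero_of_lt_one hc1)
    rw [add_zero] at htend
    refine ge_of_tendsto' htend ?_
    intro N
    calc μ A = (∑ t ∈ Finset.range N, d * c ^ t * ρ t A) + c ^ N * ν N A := hpart N
    _ ≤ S + c ^ N * 1 := by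
        gcongr
        · exact ENNReal.sum_le_tsum _
        · exact hνle N
    _ = S + c ^ N := by rw [mul_one]
  have hμA : μ A = S := le_antisymm hleS hSle
  -- compute (μ.bind PlL) A
  rw [Measure.bind_apply hA hPlLm.aemeasurable]
  have e3 : ∀ x, PlL x A = ∑' t : ℕ, d * c ^ t * ((Q x).bind (kpow P t)) A := by
    intro x
    rw [hPlL x, Measure.sum_apply _ hA]
    simp only [Measure.smul_apply, smul_eq_mul, hcoef]
  simp only [e3]
  have hQkA : ∀ t : ℕ, Measurable fun x => ((Q x).bind (kpow P t)) A :=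
    fun t => (Measure.measurable_coe hA).comp (hQk t)
  rw [lintegral_tsum fun t => ((hQkA t).const_mul _).aemeasurable]
  have e4 : ∀ t : ℕ, ∫⁻ x, d * c ^ t * ((Q x).bind (kpow P t)) A ∂μ = d * c ^ t * ρ t A := by
    intro t
    rw [lintegral_const_mul' _ _ (ENNReal.mul_ne_top ENNReal.ofReal_ne_top
      (ENNReal.pow_ne_top ENNReal.ofReal_ne_top))]
    congr 1
    exact (Measure.bind_apply hA (hQk t).aemeasurable).symm
  simp only [e4]
  exact hμA.symm
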